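/- If an orientation-preserving circle homeomorphism g has rotation number 0, and there exist homeomorphisms arbitrarily C⁰-close to g with positive rotation number as well as homeomorphisms arbitrarily C⁰-close with negative rotation number, then g is the identity. -/

import Mathlib

open Filter Topology Set

noncomputable section

abbrev S1 : Type := AddCircle (1 : ℝ)

/-- `F : ℝ → ℝ` is a lift of the orientation-preserving circle map `f`. -/
def IsLiftOf (F : ℝ → ℝ) (f : S1 → S1) : Prop :=
  StrictMono F ∧ Continuous F ∧ (∀ x, F (x + 1) = F x + 1) ∧
    ∀ x : ℝ, ((F x : ℝ) : S1) = f (x : S1)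

/-- `τ` is the translation number of the lift `F`. -/
def HasTransNum (F : ℝ → ℝ) (τ : ℝ) : Prop :=
  Tendsto (fun n : ℕ => F^[n] 0 / (n : ℝ)) atTop (𝓝 τ)

/-- `r` is the rotation number of the circle map `f`. -/
def HasRotNum (f : S1 → S1) (r : S1) : Prop :=
  ∃ F τ, IsLiftOf F f ∧ HasTransNum F τ ∧ ((τ : ℝ) : S1) = r

lemma round_eq_of_abs_lt {z : ℝ} {m : ℤ} (h : |z - m| < 1/2) : round z = m := by
  rw [abs_lt] at h
  rw [round_eq]
  refine Int.floor_eq_iff.mpr ⟨by linarith [h.1], by push_cast; linarith [h.2]⟩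

lemma S1.coe_int (n : ℤ) : (((n : ℝ) : S1)) = 0 := by
  rw [AddCircle.coe_eq_zero_iff]
  exact ⟨n, by simp⟩

lemma S1.coe_eq_coe {a b : ℝ} : ((a : S1) = (b : S1)) ↔ ∃ n : ℤ, a - b = n := by
  constructor
  · intro h
    have : ((a - b : ℝ) : S1) = 0 := by
      rw [AddCircle.coe_sub, h, sub_self]
    rw [AddCircle.coe_eq_zero_iff] at this
    obtain ⟨n, hn⟩ := this
    exact ⟨n, by simpa using hn.symm⟩
  · rintro ⟨n, hn⟩
    have : a = b + n := by linarith [hn]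
    rw [this, AddCircle.coe_add, S1.coe_int, add_zero]

lemma S1.dist_coe (a b : ℝ) : dist ((a : S1)) ((b : S1)) = |(a - b) - round (a - b)| := by
  rw [dist_eq_norm, ← AddCircle.coe_sub, AddCircle.norm_eq]
  simp

def ofMono (F : ℝ → ℝ) (hm : Monotone F) (h1 : ∀ x, F (x + 1) = F x + 1) : CircleDeg1Lift :=
  ⟨⟨F, hm⟩, h1⟩

@[simp] lemma ofMono_coe (F hm h1) : ⇑(ofMono F hm h1) = F := rfl

lemma tau_eq {F : ℝ → ℝ} {t : ℝ} (hm : Monotone F) (h1 : ∀ x, F (x + 1) = F x + 1)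
    (ht : HasTransNum F t) : (ofMono F hm h1).translationNumber = t := by
  refine tendsto_nhds_unique ((ofMono F hm h1).tendsto_translation_number₀) ?_
  have : (fun n : ℕ => ((ofMono F hm h1) ^ n) 0 / (n:ℝ)) = fun n : ℕ => F^[n] 0 / (n : ℝ) := by
    funext n
    rw [CircleDeg1Lift.coe_pow]
    rfl
  rw [this]
  exact ht

def intTranslate (n : ℤ) (f : CircleDeg1Lift) : CircleDeg1Lift :=
  (CircleDeg1Lift.translate (Multiplicative.ofAdd (n : ℝ))).1 * f

lemma intTranslate_apply (n : ℤ) (f : CircleDeg1Lift) (x : ℝ) :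
    intTranslate n f x = n + f x := by
  simp [intTranslate, CircleDeg1Lift.mul_apply, CircleDeg1Lift.translate_apply]

lemma intTranslate_tau (n : ℤ) (f : CircleDeg1Lift) :
    (intTranslate n f).translationNumber = n + f.translationNumber := by
  rw [intTranslate, CircleDeg1Lift.translationNumber_mul_of_commute,
    CircleDeg1Lift.translationNumber_translate]
  rw [CircleDeg1Lift.commute_iff_commute]
  have := (f.commute_int_add n).symm
  convert this using 2
  simp [CircleDeg1Lift.translate_apply]

lemma exists_int_close {F H : ℝ → ℝ} {g h : S1 → S1} {δ : ℝ}
    (hFc : Continuous F) (hHc : Continuous H)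
    (hFl : ∀ x : ℝ, ((F x : ℝ) : S1) = g (x : S1))
    (hHl : ∀ x : ℝ, ((H x : ℝ) : S1) = h (x : S1))
    (hδ : δ ≤ 1/2) (hc : ∀ p : S1, dist (g p) (h p) < δ) :
    ∃ k : ℤ, ∀ x, |H x - k - F x| < δ := by
  set ψ : ℝ → ℝ := fun x => H x - F x with hψ
  have hψc : Continuous ψ := hHc.sub hFc
  have key : ∀ x, |ψ x - round (ψ x)| < δ := by
    intro x
    have := hc (x : S1)
    rw [← hFl x, ← hHl x, dist_comm, S1.dist_coe] at this
    exact this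
  have hlc : IsLocallyConstant (fun x => round (ψ x)) := by
    rw [IsLocallyConstant.iff_eventually_eq]
    intro x
    have hε : (0:ℝ) < 1/2 - |ψ x - round (ψ x)| := by linarith [key x]
    have : ∀ᶠ y in 𝓝 x, |ψ y - ψ x| < 1/2 - |ψ x - round (ψ x)| := by
      have := Metric.tendsto_nhds.mp (hψc.tendsto x) _ hε
      simpa [Real.dist_eq] using this
    filter_upwards [this] with y hy
    refine round_eq_of_abs_lt ?_
    calc |ψ y - (round (ψ x) : ℝ)| ≤ |ψ y - ψ x| + |ψ x - round (ψ x)| := abs_sub_le _ _ _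
      _ < 1/2 := by linarith [key x]
  refine ⟨round (ψ 0), fun x => ?_⟩
  have : round (ψ x) = round (ψ 0) := hlc.apply_eq_of_preconnectedSpace x 0
  have h2 := key x
  rw [this] at h2
  calc |H x - (round (ψ 0) : ℝ) - F x| = |ψ x - round (ψ 0)| := by congr 1; simp only [hψ]; ring
    _ < δ := h2

lemma tau_pin {F : CircleDeg1Lift} (hFc : Continuous F) {x₀ : ℝ} (hfix : F x₀ = x₀) :
    ∃ δ₀ > 0, δ₀ ≤ 1/2 ∧ ∀ H : CircleDeg1Lift, (∀ x, |H x - F x| < δ₀) →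
      |H.translationNumber| ≤ 1/3 := by
  have hcont := Metric.continuousAt_iff.mp (hFc.continuousAt (x := x₀))
  obtain ⟨η₁', hη₁'pos, hη₁'⟩ := hcont (1/4) (by norm_num)
  set η₁ : ℝ := min (η₁'/2) (1/4) with hη₁def
  have hη₁pos : 0 < η₁ := lt_min (by linarith) (by norm_num)
  have hη₁le : η₁ ≤ 1/4 := min_le_right _ _
  have hη₁prop : ∀ t, |t - x₀| ≤ η₁ → |F t - x₀| < 1/4 := by
    intro t ht
    have : dist t x₀ < η₁' := by
      rw [Real.dist_eq]; exact lt_of_le_of_lt ht (lt_of_le_of_lt (min_le_left _ _) (by linarith))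
    have := hη₁' this
    rwa [Real.dist_eq, hfix] at this
  obtain ⟨η₂', hη₂'pos, hη₂'⟩ := hcont (η₁/2) (by linarith)
  set η₂ : ℝ := η₂'/2 with hη₂def
  have hη₂prop : ∀ t, |t - x₀| ≤ η₂ → |F t - x₀| < η₁/2 := by
    intro t ht
    have : dist t x₀ < η₂' := by rw [Real.dist_eq]; linarith
    have := hη₂' this
    rwa [Real.dist_eq, hfix] at this
  refine ⟨min η₂ (η₁/2), lt_min (by linarith) (by linarith),
    le_trans (min_le_right _ _) (by linarith), ?_⟩
  intro H hH
  set δ₀ : ℝ := min η₂ (η₁/2) with hδ₀def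
  have hδ₀η₂ : δ₀ ≤ η₂ := min_le_left _ _
  have hδ₀η₁ : δ₀ ≤ η₁/2 := min_le_right _ _
  have h1 : |H x₀ - x₀| < δ₀ := by have := hH x₀; rwa [hfix] at this
  have h1' : |F (H x₀) - x₀| < η₁/2 := hη₂prop _ (le_trans h1.le hδ₀η₂)
  have h2 : |H (H x₀) - x₀| < η₁ := by
    have := hH (H x₀)
    calc |H (H x₀) - x₀| ≤ |H (H x₀) - F (H x₀)| + |F (H x₀) - x₀| := abs_sub_le _ _ _
      _ < δ₀ + η₁/2 := by linarith
      _ ≤ η₁ := by linarith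
  have h2' : |F (H (H x₀)) - x₀| < 1/4 := hη₁prop _ h2.le
  have h3 : |H (H (H x₀)) - x₀| < 1/2 := by
    have := hH (H (H x₀))
    calc |H (H (H x₀)) - x₀| ≤ |H (H (H x₀)) - F (H (H x₀))| + |F (H (H x₀)) - x₀| :=
        abs_sub_le _ _ _
      _ < δ₀ + 1/4 := by linarith
      _ ≤ 1/2 := by linarith [le_trans hδ₀η₁ (by linarith : η₁/2 ≤ (1/8:ℝ))]
  have hpow : (H ^ 3 : CircleDeg1Lift) x₀ = H (H (H x₀)) := by
    rw [CircleDeg1Lift.coe_pow]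
    simp [Function.iterate_succ_apply']
  rw [abs_lt] at h3
  have hup : (H ^ 3 : CircleDeg1Lift).translationNumber ≤ ((1:ℤ):ℝ) := by
    apply CircleDeg1Lift.translationNumber_le_of_le_add_int (x := x₀) (m := 1)
    rw [hpow]; push_cast; linarith [h3.2]
  have hdown : ((-1:ℤ):ℝ) ≤ (H ^ 3 : CircleDeg1Lift).translationNumber := by
    apply CircleDeg1Lift.le_translationNumber_of_add_int_le (x := x₀) (m := -1)
    rw [hpow]; push_cast; linarith [h3.1]
  rw [CircleDeg1Lift.translationNumber_pow] at hup hdown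
  rw [abs_le]
  push_cast at hup hdown
  constructor <;> linarith

lemma ne_fixed_of_tau_ne {H : CircleDeg1Lift} (hτ : H.translationNumber ≠ 0) :
    ∀ x, H x ≠ x := by
  intro x hx
  apply hτ
  have hx' : H x = x + ((0:ℤ):ℝ) := by push_cast; simpa using hx
  simpa using H.translationNumber_of_eq_add_int hx'

lemma lt_of_tau_neg {H : CircleDeg1Lift} (hc : Continuous H)
    (hτ : H.translationNumber < 0) : ∀ x, H x < x := by
  have hne : ∀ x, H x ≠ x := ne_fixed_of_tau_ne (by linarith)
  have hex : ∃ a, H a < a := by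
    by_contra hco
    push_neg at hco
    have : (0:ℝ) ≤ H.translationNumber :=
      H.le_translationNumber_of_add_le (fun x => by simpa using hco x)
    linarith
  obtain ⟨a, ha⟩ := hex
  intro b
  by_contra hb
  push_neg at hb
  have hb' : b < H b := lt_of_le_of_ne hb (hne b).symm
  have hivt := intermediate_value_uIcc (f := fun x => H x - x) (a := a) (b := b)
    (Continuous.continuousOn (hc.sub continuous_id))
  have h0 : (0:ℝ) ∈ uIcc (H a - a) (H b - b) := by
    rw [Set.mem_uIcc]; left; constructor <;> linarith
  obtain ⟨c, _, hc0⟩ := hivt h0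
  simp only at hc0
  exact hne c (by linarith)

lemma gt_of_tau_pos {H : CircleDeg1Lift} (hc : Continuous H)
    (hτ : 0 < H.translationNumber) : ∀ x, x < H x := by
  have hne : ∀ x, H x ≠ x := ne_fixed_of_tau_ne (by linarith)
  have hex : ∃ a, a < H a := by
    by_contra hco
    push_neg at hco
    have : H.translationNumber ≤ 0 :=
      H.translationNumber_le_of_le_add (fun x => by simpa using hco x)
    linarith
  obtain ⟨a, ha⟩ := hex
  intro b
  by_contra hb
  push_neg at hb
  have hb' : H b < b := lt_of_le_of_ne hb (hne b)
  have hivt := intermediate_value_uIcc (f := fun x => H x - x) (a := a) (b := b)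
    (Continuous.continuousOn (hc.sub continuous_id))
  have h0 : (0:ℝ) ∈ uIcc (H a - a) (H b - b) := by
    rw [Set.mem_uIcc]; right; constructor <;> linarith
  obtain ⟨c, _, hc0⟩ := hivt h0
  simp only at hc0
  exact hne c (by linarith)

/-- If `g` has rotation number `0` and there are homeomorphisms arbitrarily
`C⁰`-close to `g` with positive rotation number, and also ones with negative
rotation number, then `g` is the identity. -/
theorem rigid_zero_rotNum (g : S1 → S1) (hg : ∃ F, IsLiftOf F g)
    (h0 : HasRotNum g 0)
    (hpos : ∀ δ > 0, ∃ h : S1 → S1, (∃ F, IsLiftOf F h) ∧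
      (∀ x, dist (g x) (h x) < δ) ∧
      ∃ τ : ℝ, 0 < τ ∧ τ ≤ 1 / 2 ∧ HasRotNum h ((τ : ℝ) : S1))
    (hneg : ∀ δ > 0, ∃ h : S1 → S1, (∃ F, IsLiftOf F h) ∧
      (∀ x, dist (g x) (h x) < δ) ∧
      ∃ τ : ℝ, -(1 / 2) ≤ τ ∧ τ < 0 ∧ HasRotNum h ((τ : ℝ) : S1)) :
    ∀ x, g x = x := by
  by_contra hcon
  push_neg at hcon
  obtain ⟨p, hp⟩ := hcon
  -- a lift of g with translation number 0
  obtain ⟨F₀, τ₀, ⟨hF₀sm, hF₀c, hF₀1, hF₀l⟩, hτ₀, hτ₀0⟩ := h0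
  have hm : ∃ m : ℤ, τ₀ = m := by
    rw [AddCircle.coe_eq_zero_iff] at hτ₀0
    obtain ⟨n, hn⟩ := hτ₀0
    exact ⟨n, by simpa using hn.symm⟩
  obtain ⟨m, hm⟩ := hm
  set F₀c := ofMono F₀ hF₀sm.monotone hF₀1 with hF₀cdef
  have hτF₀ : F₀c.translationNumber = τ₀ := tau_eq _ _ hτ₀
  set Fc := intTranslate (-m) F₀c with hFcdef
  have hFapp : ∀ x, Fc x = F₀ x - m := by
    intro x
    rw [hFcdef, intTranslate_apply]
    push_cast
    show -(m:ℝ) + F₀ x = F₀ x - m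
    ring
  have hFτ : Fc.translationNumber = 0 := by
    rw [hFcdef, intTranslate_tau, hτF₀, hm]
    push_cast
    ring
  have hFcoe : ⇑Fc = fun x => F₀ x - m := funext hFapp
  have hFcont : Continuous ⇑Fc := by
    rw [hFcoe]; exact hF₀c.sub continuous_const
  have hFsm : StrictMono ⇑Fc := by
    rw [hFcoe]; intro a b hab; simpa using hF₀sm hab
  have hFl : ∀ x : ℝ, ((Fc x : ℝ) : S1) = g (x : S1) := by
    intro x
    rw [hFapp, AddCircle.coe_sub, S1.coe_int, sub_zero, hF₀l]
  -- fixed point of Fc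
  obtain ⟨x₀, hx₀⟩ := Fc.exists_eq_add_translationNumber hFcont
  rw [hFτ, add_zero] at hx₀
  -- pinning radius
  obtain ⟨δ₀, hδ₀pos, hδ₀half, hpin⟩ := tau_pin hFcont hx₀
  -- representative of p in [x₀, x₀+1)
  obtain ⟨y, hy⟩ := Quotient.exists_rep p
  set y₀ : ℝ := y - ⌊y - x₀⌋ with hy₀def
  have hy₀coe : ((y₀ : ℝ) : S1) = p := by
    rw [hy₀def, AddCircle.coe_sub, S1.coe_int, sub_zero]
    exact hy
  have hy₀l : x₀ ≤ y₀ := by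
    have := Int.floor_le (y - x₀); rw [hy₀def]; linarith
  have hy₀u : y₀ < x₀ + 1 := by
    have := Int.lt_floor_add_one (y - x₀); rw [hy₀def]; linarith
  set c : ℝ := Fc y₀ - y₀ with hcdef
  have hcne : c ≠ 0 := by
    intro hc0
    apply hp
    have : Fc y₀ = y₀ := by linarith [hc0]
    calc g p = g ((y₀ : ℝ) : S1) := by rw [hy₀coe]
      _ = ((Fc y₀ : ℝ) : S1) := (hFl y₀).symm
      _ = ((y₀ : ℝ) : S1) := by rw [this]
      _ = p := hy₀coe
  have hcl : -1 < c := by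
    have h1 : Fc x₀ ≤ Fc y₀ := hFsm.monotone hy₀l
    rw [hx₀] at h1
    rw [hcdef]; linarith
  have hcu : c < 1 := by
    have h1 : Fc y₀ < Fc (x₀ + 1) := hFsm hy₀u
    have h2 : Fc (x₀ + 1) = Fc x₀ + 1 := Fc.map_add_one x₀
    rw [hx₀] at h2
    rw [hcdef]; linarith [h1, h2 ▸ h1]
  set δ : ℝ := min δ₀ |c| with hδdef
  have hδpos : 0 < δ := lt_min hδ₀pos (abs_pos.mpr hcne)
  have hδhalf : δ ≤ 1/2 := le_trans (min_le_left _ _) hδ₀half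
  rcases hcne.lt_or_gt with hcneg | hcpos
  · -- c < 0 : use a positive perturbation
    obtain ⟨h, _, hclose, σ, hσpos, hσhalf, hrot⟩ := hpos δ hδpos
    obtain ⟨H₂, τ₂, ⟨hH₂sm, hH₂c, hH₂1, hH₂l⟩, hτ₂, hτ₂e⟩ := hrot
    obtain ⟨j, hj⟩ := S1.coe_eq_coe.mp hτ₂e
    set H₂c := ofMono H₂ hH₂sm.monotone hH₂1 with hH₂cdef
    have hτH₂ : H₂c.translationNumber = τ₂ := tau_eq _ _ hτ₂
    obtain ⟨k, hk⟩ := exists_int_close hFcont hH₂c hFl hH₂l hδhalf hclose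
    set Hc := intTranslate (-k) H₂c with hHcdef
    have hHapp : ∀ x, Hc x = H₂ x - k := by
      intro x
      rw [hHcdef, intTranslate_apply]
      show ((-k : ℤ) : ℝ) + H₂ x = H₂ x - (k : ℝ)
      push_cast; ring
    have hHk : ∀ x, |Hc x - Fc x| < δ := by
      intro x
      have := hk x
      rw [hHapp]
      calc |H₂ x - k - Fc x| = |H₂ x - k - Fc x| := rfl
        _ < δ := this
    have hHτ : Hc.translationNumber = τ₂ - k := by
      rw [hHcdef, intTranslate_tau, hτH₂]; push_cast; ring
    have hHcont : Continuous ⇑Hc := by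
      have : ⇑Hc = fun x => H₂ x - k := funext hHapp
      rw [this]; exact hH₂c.sub continuous_const
    have hpinH : |Hc.translationNumber| ≤ 1/3 :=
      hpin Hc (fun x => lt_of_lt_of_le (hHk x) (min_le_left _ _))
    -- τ₂ - k = σ + (j - k)
    have hjk : Hc.translationNumber = σ + ((j - k : ℤ) : ℝ) := by
      rw [hHτ]; push_cast; linarith [hj]
    have hi0 : (j - k : ℤ) = 0 := by
      by_contra hi
      rw [abs_le, hjk] at hpinH
      rcases lt_or_gt_of_ne hi with hlt | hgt
      · have h4 : (j - k : ℤ) ≤ -1 := by omega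
        have h5 : ((j - k : ℤ) : ℝ) ≤ -1 := by exact_mod_cast h4
        linarith [hpinH.1]
      · have : (1:ℝ) ≤ ((j - k : ℤ) : ℝ) := by exact_mod_cast hgt
        linarith [hpinH.2]
    have hτHσ : Hc.translationNumber = σ := by rw [hjk, hi0]; simp
    have hgt : ∀ x, x < Hc x := gt_of_tau_pos hHcont (by rw [hτHσ]; exact hσpos)
    have h1 := hHk y₀
    rw [abs_lt] at h1
    have h2 : δ ≤ -c := le_trans (min_le_right _ _) (le_of_eq (abs_of_neg hcneg))
    have h3 : Fc y₀ = y₀ + c := by rw [hcdef]; ring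
    linarith [hgt y₀, h1.2]
  · -- c > 0 : use a negative perturbation
    obtain ⟨h, _, hclose, σ, hσhalf, hσneg, hrot⟩ := hneg δ hδpos
    obtain ⟨H₂, τ₂, ⟨hH₂sm, hH₂c, hH₂1, hH₂l⟩, hτ₂, hτ₂e⟩ := hrot
    obtain ⟨j, hj⟩ := S1.coe_eq_coe.mp hτ₂e
    set H₂c := ofMono H₂ hH₂sm.monotone hH₂1 with hH₂cdef
    have hτH₂ : H₂c.translationNumber = τ₂ := tau_eq _ _ hτ₂
    obtain ⟨k, hk⟩ := exists_int_close hFcont hH₂c hFl hH₂l hδhalf hclose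
    set Hc := intTranslate (-k) H₂c with hHcdef
    have hHapp : ∀ x, Hc x = H₂ x - k := by
      intro x
      rw [hHcdef, intTranslate_apply]
      show ((-k : ℤ) : ℝ) + H₂ x = H₂ x - (k : ℝ)
      push_cast; ring
    have hHk : ∀ x, |Hc x - Fc x| < δ := by
      intro x
      have := hk x
      rw [hHapp]
      exact this
    have hHτ : Hc.translationNumber = τ₂ - k := by
      rw [hHcdef, intTranslate_tau, hτH₂]; push_cast; ring
    have hHcont : Continuous ⇑Hc := by
      have : ⇑Hc = fun x => H₂ x - k := funext hHapp
      rw [this]; exact hH₂c.sub continuous_const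
    have hpinH : |Hc.translationNumber| ≤ 1/3 :=
      hpin Hc (fun x => lt_of_lt_of_le (hHk x) (min_le_left _ _))
    have hjk : Hc.translationNumber = σ + ((j - k : ℤ) : ℝ) := by
      rw [hHτ]; push_cast; linarith [hj]
    have hi0 : (j - k : ℤ) = 0 := by
      by_contra hi
      rw [abs_le, hjk] at hpinH
      rcases lt_or_gt_of_ne hi with hlt | hgt
      · have h4 : (j - k : ℤ) ≤ -1 := by omega
        have h5 : ((j - k : ℤ) : ℝ) ≤ -1 := by exact_mod_cast h4
        linarith [hpinH.1]
      · have : (1:ℝ) ≤ ((j - k : ℤ) : ℝ) := by exact_mod_cast hgt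
        linarith [hpinH.2]
    have hτHσ : Hc.translationNumber = σ := by rw [hjk, hi0]; simp
    have hlt : ∀ x, Hc x < x := lt_of_tau_neg hHcont (by rw [hτHσ]; exact hσneg)
    have h1 := hHk y₀
    rw [abs_lt] at h1
    have h2 : δ ≤ c := le_trans (min_le_right _ _) (le_of_eq (abs_of_pos hcpos))
    have h3 : Fc y₀ = y₀ + c := by rw [hcdef]; ring
    linarith [hlt y₀, h1.1]
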